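/- arXiv:1210.1092 — 2 statements merged into one kernel-verified Lean document; each statement's English description precedes it below -/
import Mathlib

section
/- Let X₁, …, X_n be independent random vectors in ℝ^p with E X_i = 0, ‖X_i‖ ≤ M almost surely for each i, and (1/n)·Σ_{i=1}^n Cov(X_i) ⪰ λ·I_p for some λ > 0 (in the positive semidefinite order). Then there exist ε₀ > 0 and c > 0, depending only on M, λ and p, such that |∏_{i=1}^n E exp(i·t'X_i/√n)| ≤ exp(−c·‖t‖²) for all t ∈ ℝ^p with ‖t‖ ≤ ε₀·√n. In particular, for every d₂ > 0 and all n ≥ 2, sup{ |∏_{i=1}^n E exp(i·t'X_i/√n)| : d₂·√(log n) ≤ ‖t‖ ≤ ε₀·√n } ≤ n^{−c·d₂²}. -/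
open MeasureTheory ProbabilityTheory Matrix Finset Real

noncomputable section

/-- Euclidean norm of a finite-dimensional real vector. -/
def vnorm {ι : Type*} [Fintype ι] (v : ι → ℝ) : ℝ := Real.sqrt (∑ i, v i ^ 2)


lemma vnorm_nonneg {ι : Type*} [Fintype ι] (v : ι → ℝ) : 0 ≤ vnorm v := Real.sqrt_nonneg _

lemma vnorm_sq {ι : Type*} [Fintype ι] (v : ι → ℝ) : vnorm v ^ 2 = ∑ i, v i ^ 2 :=
  Real.sq_sqrt (by positivity)

lemma abs_dotProduct_le {ι : Type*} [Fintype ι] (t x : ι → ℝ) :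
    |t ⬝ᵥ x| ≤ vnorm t * vnorm x := by
  have h := Finset.sum_mul_sq_le_sq_mul_sq Finset.univ t x
  calc |t ⬝ᵥ x| = Real.sqrt ((∑ i, t i * x i) ^ 2) := by
        rw [Real.sqrt_sq_eq_abs]; rfl
    _ ≤ Real.sqrt ((∑ i, t i ^ 2) * ∑ i, x i ^ 2) := Real.sqrt_le_sqrt h
    _ = vnorm t * vnorm x := Real.sqrt_mul (by positivity) _

lemma abs_apply_le_vnorm {ι : Type*} [Fintype ι] (v : ι → ℝ) (a : ι) :
    |v a| ≤ vnorm v := by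
  rw [← Real.sqrt_sq_eq_abs]
  exact Real.sqrt_le_sqrt (Finset.single_le_sum (f := fun i => v i ^ 2)
    (fun i _ => sq_nonneg _) (Finset.mem_univ a))

lemma charFun_single_bound {Ω : Type} [MeasurableSpace Ω] (P : Measure Ω)
    [IsProbabilityMeasure P] (Y : Ω → ℝ) (hY : Measurable Y) (K : ℝ)
    (hbd : ∀ᵐ ω ∂P, |Y ω| ≤ K) (hmean : ∫ ω, Y ω ∂P = 0)
    (u : ℝ) (hu : 0 ≤ u) (huK : u * K ≤ 1) :
    ‖∫ ω, Complex.exp (Complex.I * ((u * Y ω : ℝ) : ℂ)) ∂P‖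
      ≤ Real.exp (-(u ^ 2 * (∫ ω, Y ω ^ 2 ∂P) / 4)) := by
  have hK : 0 ≤ K := by
    by_contra h
    push_neg at h
    have h2 : ∀ᵐ ω ∂P, False := by
      filter_upwards [hbd] with ω hω
      exact absurd (lt_of_le_of_lt (le_trans (abs_nonneg _) hω) h) (lt_irrefl 0)
    rw [ae_iff] at h2
    simp only [not_false_eq_true, Set.setOf_true] at h2
    rw [measure_univ] at h2
    exact one_ne_zero h2
  -- integrability facts
  have hmY : AEStronglyMeasurable Y P := hY.aestronglyMeasurable
  have intY : Integrable Y P :=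
    ⟨hmY, HasFiniteIntegral.of_bounded (C := K) (by simpa [Real.norm_eq_abs] using hbd)⟩
  have intY2 : Integrable (fun ω => Y ω ^ 2) P := by
    refine ⟨(hY.pow_const 2).aestronglyMeasurable,
      HasFiniteIntegral.of_bounded (C := K ^ 2) ?_⟩
    filter_upwards [hbd] with ω hω
    rw [Real.norm_eq_abs, abs_pow]
    exact pow_le_pow_left₀ (abs_nonneg _) hω 2
  have intY3 : Integrable (fun ω => |Y ω| ^ 3) P := by
    refine ⟨(hY.abs.pow_const 3).aestronglyMeasurable,
      HasFiniteIntegral.of_bounded (C := K ^ 3) ?_⟩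
    filter_upwards [hbd] with ω hω
    simpa [Real.norm_eq_abs, abs_pow, abs_abs] using pow_le_pow_left₀ (abs_nonneg _) hω 3
  set V := ∫ ω, Y ω ^ 2 ∂P with hVdef
  have hV0 : 0 ≤ V := integral_nonneg fun ω => sq_nonneg _
  have hVK : V ≤ K ^ 2 := by
    have : ∀ᵐ ω ∂P, Y ω ^ 2 ≤ K ^ 2 := by
      filter_upwards [hbd] with ω hω
      calc Y ω ^ 2 = |Y ω| ^ 2 := (sq_abs _).symm
        _ ≤ K ^ 2 := pow_le_pow_left₀ (abs_nonneg _) hω 2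
    calc V ≤ ∫ _ω, K ^ 2 ∂P := integral_mono_ae intY2 (integrable_const _) this
      _ = K ^ 2 := by simp
  -- third absolute moment bound
  have hm3 : (∫ ω, |Y ω| ^ 3 ∂P) ≤ K * V := by
    have : ∀ᵐ ω ∂P, |Y ω| ^ 3 ≤ K * Y ω ^ 2 := by
      filter_upwards [hbd] with ω hω
      calc |Y ω| ^ 3 = |Y ω| * |Y ω| ^ 2 := by ring
        _ ≤ K * |Y ω| ^ 2 := by
            exact mul_le_mul_of_nonneg_right hω (by positivity)
        _ = K * Y ω ^ 2 := by rw [sq_abs]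
    calc (∫ ω, |Y ω| ^ 3 ∂P) ≤ ∫ ω, K * Y ω ^ 2 ∂P :=
          integral_mono_ae intY3 (intY2.const_mul K) this
      _ = K * V := MeasureTheory.integral_const_mul K _
  set r : Ω → ℝ := fun ω => u * Y ω with hrdef
  have hr_bd : ∀ᵐ ω ∂P, |r ω| ≤ u * K := by
    filter_upwards [hbd] with ω hω
    rw [hrdef]
    rw [abs_mul, abs_of_nonneg hu]
    exact mul_le_mul_of_nonneg_left hω hu
  have hr_meas : Measurable r := hY.const_mul u
  have hmexp : AEStronglyMeasurable (fun ω => Complex.exp (Complex.I * (r ω : ℂ))) P := by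
    apply Measurable.aestronglyMeasurable
    exact Complex.measurable_exp.comp
      (measurable_const.mul (Complex.measurable_ofReal.comp hr_meas))
  have intExp : Integrable (fun ω => Complex.exp (Complex.I * (r ω : ℂ))) P := by
    refine ⟨hmexp, HasFiniteIntegral.of_bounded (C := 1)
      (Filter.Eventually.of_forall fun ω => ?_)⟩
    rw [mul_comm, Complex.norm_exp_ofReal_mul_I]
  have hptwise : ∀ᵐ ω ∂P, ‖Complex.exp (Complex.I * (r ω : ℂ)) -
      (1 + Complex.I * (r ω : ℂ) - (r ω : ℂ) ^ 2 / 2)‖ ≤ (2/9) * |r ω| ^ 3 := by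
    filter_upwards [hr_bd] with ω hω
    have habs : ‖Complex.I * (r ω : ℂ)‖ = |r ω| := by
      rw [norm_mul, Complex.norm_I, Complex.norm_real, Real.norm_eq_abs, one_mul]
    have h1 : ‖Complex.I * (r ω : ℂ)‖ ≤ 1 := by
      rw [habs]; exact hω.trans huK
    have hb := Complex.exp_bound h1 (n := 3) (by norm_num)
    have hsum : ∑ m ∈ Finset.range 3, (Complex.I * (r ω : ℂ)) ^ m / m.factorial
        = 1 + Complex.I * (r ω : ℂ) - (r ω : ℂ) ^ 2 / 2 := by
      rw [Finset.sum_range_succ, Finset.sum_range_succ, Finset.sum_range_one]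
      norm_num [Nat.factorial]
      rw [mul_pow, Complex.I_sq]
      ring
    rw [hsum] at hb
    refine hb.trans ?_
    rw [habs]
    norm_num [Nat.factorial]
    nlinarith [abs_nonneg (r ω), pow_nonneg (abs_nonneg (r ω)) 3]
  -- integrability of the linear part
  have e1 : Integrable (fun ω => Complex.I * (r ω : ℂ)) P := by
    have h : Integrable (fun ω => ((r ω : ℝ) : ℂ)) P := (intY.const_mul u).ofReal
    exact h.const_mul Complex.I
  have intr2 : Integrable (fun ω => r ω ^ 2) P := by
    have h := intY2.const_mul (u ^ 2)
    refine h.congr (Filter.Eventually.of_forall fun ω => ?_)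
    rw [hrdef]; ring
  have e2 : Integrable (fun ω => (r ω : ℂ) ^ 2 / 2) P := by
    have h : Integrable (fun ω => ((r ω ^ 2 / 2 : ℝ) : ℂ)) P := (intr2.div_const 2).ofReal
    refine h.congr (Filter.Eventually.of_forall fun ω => ?_)
    push_cast
    ring
  have hlin_int : Integrable (fun ω => (1 : ℂ) + Complex.I * (r ω : ℂ)
      - (r ω : ℂ) ^ 2 / 2) P := ((integrable_const 1).add e1).sub e2
  -- value of the integral of the linear part
  have hr0 : (∫ ω, r ω ∂P) = 0 := by
    rw [hrdef]
    simp only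
    rw [MeasureTheory.integral_const_mul, hmean, mul_zero]
  have h2 : (∫ ω, ((1 : ℂ) + Complex.I * (r ω : ℂ) - (r ω : ℂ) ^ 2 / 2) ∂P)
      = 1 - ((u ^ 2 * V / 2 : ℝ) : ℂ) := by
    have hs : (∫ ω, ((1 : ℂ) + Complex.I * (r ω : ℂ) - (r ω : ℂ) ^ 2 / 2) ∂P)
        = (∫ ω, ((1 : ℂ) + Complex.I * (r ω : ℂ)) ∂P) - ∫ ω, (r ω : ℂ) ^ 2 / 2 ∂P :=
      integral_sub ((integrable_const 1).add e1) e2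
    have ha : (∫ ω, ((1 : ℂ) + Complex.I * (r ω : ℂ)) ∂P)
        = (∫ _ω, (1 : ℂ) ∂P) + ∫ ω, Complex.I * (r ω : ℂ) ∂P :=
      integral_add (integrable_const 1) e1
    rw [hs, ha, integral_const]
    have hI : (∫ ω, Complex.I * (r ω : ℂ) ∂P) = 0 := by
      rw [MeasureTheory.integral_const_mul]
      rw [show (∫ ω, ((r ω : ℝ) : ℂ) ∂P) = ((∫ ω, r ω ∂P : ℝ) : ℂ) from integral_ofReal]
      rw [hr0]
      simp
    have hr2v : (∫ ω, (r ω : ℂ) ^ 2 / 2 ∂P) = ((u ^ 2 * V / 2 : ℝ) : ℂ) := by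
      have hfun : (fun ω => (r ω : ℂ) ^ 2 / 2) = fun ω => ((u ^ 2 / 2 * Y ω ^ 2 : ℝ) : ℂ) := by
        funext ω; rw [hrdef]; push_cast; ring
      rw [hfun]
      rw [show (∫ ω, ((u ^ 2 / 2 * Y ω ^ 2 : ℝ) : ℂ) ∂P)
          = ((∫ ω, u ^ 2 / 2 * Y ω ^ 2 ∂P : ℝ) : ℂ) from integral_ofReal]
      rw [MeasureTheory.integral_const_mul]
      norm_cast
      rw [← hVdef]
      ring
    rw [hI, hr2v]
    simp [measure_univ]
  have key : (∫ ω, Complex.exp (Complex.I * ((r ω : ℝ) : ℂ)) ∂P)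
      = (∫ ω, (Complex.exp (Complex.I * (r ω : ℂ))
          - (1 + Complex.I * (r ω : ℂ) - (r ω : ℂ) ^ 2 / 2)) ∂P)
        + (1 - ((u ^ 2 * V / 2 : ℝ) : ℂ)) := by
    rw [integral_sub intExp hlin_int, h2]
    ring
  -- error bound
  have herr : ‖∫ ω, (Complex.exp (Complex.I * (r ω : ℂ))
      - (1 + Complex.I * (r ω : ℂ) - (r ω : ℂ) ^ 2 / 2)) ∂P‖
      ≤ (2/9) * u ^ 3 * (K * V) := by
    refine (norm_integral_le_integral_norm _).trans ?_
    have hintnorm : Integrable (fun ω => ‖Complex.exp (Complex.I * (r ω : ℂ))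
        - (1 + Complex.I * (r ω : ℂ) - (r ω : ℂ) ^ 2 / 2)‖) P := (intExp.sub hlin_int).norm
    have step1 : (∫ ω, ‖Complex.exp (Complex.I * (r ω : ℂ))
        - (1 + Complex.I * (r ω : ℂ) - (r ω : ℂ) ^ 2 / 2)‖ ∂P)
        ≤ ∫ ω, (2/9) * u ^ 3 * |Y ω| ^ 3 ∂P := by
      refine integral_mono_ae hintnorm (intY3.const_mul _) ?_
      filter_upwards [hptwise] with ω hω
      refine hω.trans (le_of_eq ?_)
      rw [hrdef]
      rw [abs_mul, abs_of_nonneg hu, mul_pow]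
      ring
    refine step1.trans ?_
    rw [MeasureTheory.integral_const_mul]
    have h39 : (0:ℝ) ≤ (2/9) * u ^ 3 := by positivity
    exact mul_le_mul_of_nonneg_left hm3 h39
  -- put everything together
  have hquad : u ^ 2 * V ≤ 1 := by
    have ha : u ^ 2 * V ≤ u ^ 2 * K ^ 2 := mul_le_mul_of_nonneg_left hVK (by positivity)
    nlinarith [mul_nonneg hu hK]
  have habs_lin : ‖1 - ((u ^ 2 * V / 2 : ℝ) : ℂ)‖ = 1 - u ^ 2 * V / 2 := by
    rw [show ((1 : ℂ) - ((u ^ 2 * V / 2 : ℝ) : ℂ)) = (((1 - u ^ 2 * V / 2 : ℝ)) : ℂ) by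
      push_cast; ring, Complex.norm_real, Real.norm_eq_abs, abs_of_nonneg (by linarith)]
  calc ‖∫ ω, Complex.exp (Complex.I * ((r ω : ℝ) : ℂ)) ∂P‖
      ≤ (2/9) * u ^ 3 * (K * V) + (1 - u ^ 2 * V / 2) := by
        rw [key]
        refine (norm_add_le _ _).trans ?_
        rw [habs_lin]
        exact add_le_add_left herr _
    _ ≤ 1 - u ^ 2 * V / 4 := by
        have huKV : u ^ 3 * K * V ≤ u ^ 2 * V := by
          have := mul_le_mul_of_nonneg_right huK
            (mul_nonneg (mul_nonneg hu hu) hV0)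
          nlinarith
        nlinarith [mul_nonneg (mul_nonneg hu hu) hV0]
    _ ≤ Real.exp (-(u ^ 2 * V / 4)) := by
        have := Real.add_one_le_exp (-(u ^ 2 * V / 4))
        linarith

/-- Exponential bound on products of characteristic functions of independent,
centered, bounded random vectors whose average covariance dominates λI:
|∏ E exp(i t'X_i/√n)| ≤ exp(−c‖t‖²) for ‖t‖ ≤ ε₀√n, with ε₀, c depending only
on M, λ, p; in particular the product is at most n^{−c d₂²} on
d₂√(log n) ≤ ‖t‖ ≤ ε₀√n for n ≥ 2. -/
theorem charFun_product_bound (p : ℕ) (M lam : ℝ) (hM : 0 < M) (hlam : 0 < lam) :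
    ∃ ε₀ > (0 : ℝ), ∃ c > (0 : ℝ),
      ∀ (n : ℕ) (Ω : Type) [MeasurableSpace Ω] (P : Measure Ω),
        IsProbabilityMeasure P →
        ∀ X : Fin n → Ω → (Fin p → ℝ),
        (∀ i, Measurable (X i)) →
        iIndepFun X P →
        (∀ i a, ∫ ω, X i ω a ∂P = 0) →
        (∀ i, ∀ᵐ ω ∂P, vnorm (X i ω) ≤ M) →
        Matrix.PosSemidef
          ((Matrix.of fun a b => (n : ℝ)⁻¹ * ∑ i, ∫ ω, X i ω a * X i ω b ∂P)
            - lam • (1 : Matrix (Fin p) (Fin p) ℝ)) →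
        (∀ t : Fin p → ℝ, vnorm t ≤ ε₀ * Real.sqrt n →
          ‖∏ i, ∫ ω, Complex.exp (Complex.I *
              (((t ⬝ᵥ X i ω) / Real.sqrt n : ℝ) : ℂ)) ∂P‖
            ≤ Real.exp (-c * vnorm t ^ 2)) ∧
        (∀ d₂ : ℝ, 0 < d₂ → 2 ≤ n → ∀ t : Fin p → ℝ,
          d₂ * Real.sqrt (Real.log n) ≤ vnorm t → vnorm t ≤ ε₀ * Real.sqrt n →
          ‖∏ i, ∫ ω, Complex.exp (Complex.I *
              (((t ⬝ᵥ X i ω) / Real.sqrt n : ℝ) : ℂ)) ∂P‖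
            ≤ (n : ℝ) ^ (-(c * d₂ ^ 2))) := by
  refine ⟨M⁻¹, by positivity, lam / 4, by positivity, ?_⟩
  intro n Ω _ P hP X hX _hindep hzero hbd hpsd
  have hmain : ∀ t : Fin p → ℝ, vnorm t ≤ M⁻¹ * Real.sqrt n →
      ‖∏ i, ∫ ω, Complex.exp (Complex.I *
          (((t ⬝ᵥ X i ω) / Real.sqrt n : ℝ) : ℂ)) ∂P‖
        ≤ Real.exp (-(lam / 4) * vnorm t ^ 2) := by
    intro t ht
    rcases Nat.eq_zero_or_pos n with hn0 | hn
    · subst hn0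
      have ht0 : vnorm t = 0 := le_antisymm (by simpa using ht) (vnorm_nonneg t)
      simp [ht0]
    have hnR : (0 : ℝ) < n := by exact_mod_cast hn
    have hsn : (0 : ℝ) < Real.sqrt n := Real.sqrt_pos.2 hnR
    set u : ℝ := (Real.sqrt n)⁻¹ with hudef
    have hu : 0 ≤ u := le_of_lt (inv_pos.2 hsn)
    have hu2 : u ^ 2 = (n : ℝ)⁻¹ := by
      rw [hudef, ← Real.sqrt_inv, Real.sq_sqrt (by positivity)]
    set K : ℝ := vnorm t * M with hKdef
    have huK : u * K ≤ 1 := by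
      have h1 : K ≤ Real.sqrt n := by
        calc K = vnorm t * M := rfl
          _ ≤ (M⁻¹ * Real.sqrt n) * M := mul_le_mul_of_nonneg_right ht hM.le
          _ = Real.sqrt n := by field_simp
      calc u * K ≤ u * Real.sqrt n := mul_le_mul_of_nonneg_left h1 hu
        _ = 1 := by rw [hudef]; field_simp
    -- per-variable data
    set Y : Fin n → Ω → ℝ := fun i ω => t ⬝ᵥ X i ω with hYdef
    have hYmeas : ∀ i, Measurable (Y i) := by
      intro i
      have : Y i = fun ω => ∑ a, t a * X i ω a := rfl
      rw [this]
      exact Finset.measurable_sum _ fun a _ =>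
        measurable_const.mul ((measurable_pi_apply a).comp (hX i))
    have hYbd : ∀ i, ∀ᵐ ω ∂P, |Y i ω| ≤ K := by
      intro i
      filter_upwards [hbd i] with ω hω
      calc |Y i ω| ≤ vnorm t * vnorm (X i ω) := abs_dotProduct_le t (X i ω)
        _ ≤ vnorm t * M := mul_le_mul_of_nonneg_left hω (vnorm_nonneg t)
    have hXa_int : ∀ i a, Integrable (fun ω => X i ω a) P := by
      intro i a
      refine ⟨((measurable_pi_apply a).comp (hX i)).aestronglyMeasurable,
        HasFiniteIntegral.of_bounded (C := M) ?_⟩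
      filter_upwards [hbd i] with ω hω
      exact le_trans (by simpa [Real.norm_eq_abs] using abs_apply_le_vnorm (X i ω) a) hω
    have hYmean : ∀ i, ∫ ω, Y i ω ∂P = 0 := by
      intro i
      have h1 : (∫ ω, Y i ω ∂P) = ∑ a, ∫ ω, t a * X i ω a ∂P := by
        rw [show Y i = fun ω => ∑ a, t a * X i ω a from rfl]
        exact integral_finset_sum _ fun a _ => (hXa_int i a).const_mul (t a)
      rw [h1]
      refine Finset.sum_eq_zero fun a _ => ?_
      rw [MeasureTheory.integral_const_mul, hzero i a, mul_zero]
    -- per-variable bound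
    have hone : ∀ i, ‖∫ ω, Complex.exp (Complex.I *
        (((t ⬝ᵥ X i ω) / Real.sqrt n : ℝ) : ℂ)) ∂P‖
        ≤ Real.exp (-(u ^ 2 * (∫ ω, Y i ω ^ 2 ∂P) / 4)) := by
      intro i
      have hrw : (∫ ω, Complex.exp (Complex.I *
          (((t ⬝ᵥ X i ω) / Real.sqrt n : ℝ) : ℂ)) ∂P)
          = ∫ ω, Complex.exp (Complex.I * ((u * Y i ω : ℝ) : ℂ)) ∂P := by
        congr 1
        funext ω
        rw [div_eq_inv_mul]
      rw [hrw]
      exact charFun_single_bound P (Y i) (hYmeas i) K (hYbd i) (hYmean i) u hu huK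
    -- covariance lower bound
    set S : Fin n → Fin p → Fin p → ℝ := fun i a b => ∫ ω, X i ω a * X i ω b ∂P with hSdef
    have hXab_int : ∀ i a b, Integrable (fun ω => X i ω a * X i ω b) P := by
      intro i a b
      refine ⟨(((measurable_pi_apply a).comp (hX i)).mul
        ((measurable_pi_apply b).comp (hX i))).aestronglyMeasurable,
        HasFiniteIntegral.of_bounded (C := M * M) ?_⟩
      filter_upwards [hbd i] with ω hω
      rw [Real.norm_eq_abs, abs_mul]
      have ha := (abs_apply_le_vnorm (X i ω) a).trans hω
      have hb := (abs_apply_le_vnorm (X i ω) b).trans hω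
      exact mul_le_mul ha hb (abs_nonneg _) (le_trans (abs_nonneg _) ha)
    have hVi : ∀ i, (∫ ω, Y i ω ^ 2 ∂P) = ∑ a, ∑ b, t a * t b * S i a b := by
      intro i
      have hsq : ∀ ω, Y i ω ^ 2 = ∑ a, ∑ b, t a * t b * (X i ω a * X i ω b) := by
        intro ω
        rw [show Y i ω = ∑ a, t a * X i ω a from rfl, sq, Finset.sum_mul_sum]
        refine Finset.sum_congr rfl fun a _ => Finset.sum_congr rfl fun b _ => by ring
      calc (∫ ω, Y i ω ^ 2 ∂P)
          = ∫ ω, ∑ a, ∑ b, t a * t b * (X i ω a * X i ω b) ∂P := by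
            congr 1; funext ω; exact hsq ω
        _ = ∑ a, ∫ ω, ∑ b, t a * t b * (X i ω a * X i ω b) ∂P :=
            integral_finset_sum _ fun a _ => integrable_finset_sum _
              fun b _ => (hXab_int i a b).const_mul _
        _ = ∑ a, ∑ b, ∫ ω, t a * t b * (X i ω a * X i ω b) ∂P :=
            Finset.sum_congr rfl fun a _ => integral_finset_sum _
              fun b _ => (hXab_int i a b).const_mul _
        _ = ∑ a, ∑ b, t a * t b * S i a b :=
            Finset.sum_congr rfl fun a _ => Finset.sum_congr rfl fun b _ =>
              MeasureTheory.integral_const_mul _ _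
    have hpsd' := hpsd.dotProduct_mulVec_nonneg t
    rw [star_trivial] at hpsd'
    have hformula : t ⬝ᵥ (((Matrix.of fun a b => (n : ℝ)⁻¹ * ∑ i, S i a b)
        - lam • (1 : Matrix (Fin p) (Fin p) ℝ)) *ᵥ t)
        = (n : ℝ)⁻¹ * (∑ i, ∑ a, ∑ b, t a * t b * S i a b) - lam * ∑ a, t a ^ 2 := by
      simp only [Matrix.mulVec, dotProduct, Matrix.sub_apply, Matrix.of_apply,
        Matrix.smul_apply, Matrix.one_apply, smul_eq_mul, mul_ite, mul_zero, mul_one,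
        ite_mul, zero_mul, sub_mul, mul_sub, Finset.sum_sub_distrib, Finset.sum_ite_eq',
        Finset.mem_univ, if_true, Finset.mul_sum, Finset.sum_mul]
      congr 1
      · calc ∑ a : Fin p, ∑ b : Fin p, ∑ i : Fin n, t a * ((↑n)⁻¹ * S i a b * t b)
            = ∑ a : Fin p, ∑ i : Fin n, ∑ b : Fin p, t a * ((↑n)⁻¹ * S i a b * t b) :=
              Finset.sum_congr rfl fun a _ => Finset.sum_comm
          _ = ∑ i : Fin n, ∑ a : Fin p, ∑ b : Fin p, t a * ((↑n)⁻¹ * S i a b * t b) :=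
              Finset.sum_comm
          _ = ∑ i : Fin n, ∑ a : Fin p, ∑ b : Fin p, (↑n)⁻¹ * (t a * t b * S i a b) :=
              Finset.sum_congr rfl fun i _ => Finset.sum_congr rfl fun a _ =>
                Finset.sum_congr rfl fun b _ => by ring
      · simp only [Finset.sum_ite_eq, Finset.mem_univ, if_true]
        exact Finset.sum_congr rfl fun a _ => by ring
    rw [hformula] at hpsd'
    have hcov : lam * ∑ a, t a ^ 2 ≤ (n : ℝ)⁻¹ * ∑ i, ∫ ω, Y i ω ^ 2 ∂P := by
      have h5 : (∑ i, ∫ ω, Y i ω ^ 2 ∂P) = ∑ i, ∑ a, ∑ b, t a * t b * S i a b :=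
        Finset.sum_congr rfl fun i _ => hVi i
      rw [h5]
      linarith
    -- combine
    have hprod : ‖∏ i, ∫ ω, Complex.exp (Complex.I *
        (((t ⬝ᵥ X i ω) / Real.sqrt n : ℝ) : ℂ)) ∂P‖
        ≤ ∏ i, Real.exp (-(u ^ 2 * (∫ ω, Y i ω ^ 2 ∂P) / 4)) := by
      rw [Complex.norm_prod]
      exact Finset.prod_le_prod (fun i _ => norm_nonneg _) fun i _ => hone i
    refine hprod.trans ?_
    rw [← Real.exp_sum]
    apply Real.exp_le_exp.2
    have hsumeq : (∑ i, -(u ^ 2 * (∫ ω, Y i ω ^ 2 ∂P) / 4))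
        = -(u ^ 2 * (∑ i, ∫ ω, Y i ω ^ 2 ∂P) / 4) := by
      rw [Finset.sum_neg_distrib]
      congr 1
      rw [Finset.mul_sum, Finset.sum_div]
    rw [hsumeq, hu2]
    have hvt : vnorm t ^ 2 = ∑ a, t a ^ 2 := vnorm_sq t
    nlinarith [hcov]
  constructor
  · intro t ht
    simpa [neg_div, neg_mul] using hmain t ht
  · intro d₂ hd₂ hn2 t hlow hup
    have hb := hmain t hup
    have h2 : (2 : ℝ) ≤ n := by exact_mod_cast hn2
    have hnR : (0 : ℝ) < n := by linarith
    have hn1 : (1 : ℝ) ≤ n := by linarith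
    have hlog : 0 ≤ Real.log n := Real.log_nonneg hn1
    have hexp : (lam / 4) * d₂ ^ 2 * Real.log n ≤ (lam / 4) * vnorm t ^ 2 := by
      have h1 : (d₂ * Real.sqrt (Real.log n)) ^ 2 ≤ vnorm t ^ 2 :=
        pow_le_pow_left₀ (by positivity) hlow 2
      rw [mul_pow, Real.sq_sqrt hlog] at h1
      nlinarith
    refine hb.trans ?_
    rw [show ((n : ℝ) ^ (-(lam / 4 * d₂ ^ 2)) : ℝ)
        = Real.exp (Real.log n * (-(lam / 4 * d₂ ^ 2))) from Real.rpow_def_of_pos hnR _]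
    apply Real.exp_le_exp.2
    nlinarith

end
end

section
/- Let M be an invertible p×p real matrix, let A = M·(0,1)^p be the image under M of the open unit cube, and let v ∈ ℝ^p with ‖v‖ ≤ η. Then the Lebesgue measure of the symmetric difference A △ (A + v) is at most 2p·|det M|·‖M^{−1}‖·η, where ‖M^{−1}‖ is the operator norm of M^{−1} and A + v = {a + v : a ∈ A}. -/
open MeasureTheory Matrix

noncomputable section

/-- Operator norm (w.r.t. the Euclidean norm) of a p×p real matrix. -/
def opNorm {p : ℕ} (M : Matrix (Fin p) (Fin p) ℝ) : ℝ :=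
  sSup ((fun v => vnorm (M.mulVec v)) '' {v | vnorm v ≤ 1})

lemma vnorm_eq {p : ℕ} (v : Fin p → ℝ) :
    vnorm v = ‖(WithLp.equiv 2 (Fin p → ℝ)).symm v‖ := by
  rw [EuclideanSpace.norm_eq]
  simp [vnorm, Real.norm_eq_abs, sq_abs]

lemma vnorm_nonneg_s9 {p : ℕ} (v : Fin p → ℝ) : 0 ≤ vnorm v := Real.sqrt_nonneg _

lemma abs_le_vnorm {p : ℕ} (v : Fin p → ℝ) (i : Fin p) : |v i| ≤ vnorm v := by
  rw [← Real.sqrt_sq_eq_abs]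
  exact Real.sqrt_le_sqrt
    (Finset.single_le_sum (f := fun j => v j ^ 2) (fun j _ => sq_nonneg _) (Finset.mem_univ i))

lemma vnorm_smul {p : ℕ} (a : ℝ) (v : Fin p → ℝ) : vnorm (a • v) = |a| * vnorm v := by
  rw [vnorm_eq, vnorm_eq v]
  have h : (WithLp.equiv 2 (Fin p → ℝ)).symm (a • v)
      = a • (WithLp.equiv 2 (Fin p → ℝ)).symm v := rfl
  rw [h, norm_smul, Real.norm_eq_abs]

lemma bddAbove_opSet {p : ℕ} (N : Matrix (Fin p) (Fin p) ℝ) :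
    BddAbove ((fun v => vnorm (N.mulVec v)) '' {v | vnorm v ≤ 1}) := by
  refine ⟨‖Matrix.toEuclideanCLM (𝕜 := ℝ) N‖, ?_⟩
  rintro - ⟨u, hu, rfl⟩
  show vnorm (N.mulVec u) ≤ _
  have h : (WithLp.equiv 2 (Fin p → ℝ)).symm (N.mulVec u)
      = Matrix.toEuclideanCLM (𝕜 := ℝ) N ((WithLp.equiv 2 (Fin p → ℝ)).symm u) := rfl
  rw [vnorm_eq, h]
  calc ‖Matrix.toEuclideanCLM (𝕜 := ℝ) N ((WithLp.equiv 2 (Fin p → ℝ)).symm u)‖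
      ≤ ‖Matrix.toEuclideanCLM (𝕜 := ℝ) N‖ * ‖(WithLp.equiv 2 (Fin p → ℝ)).symm u‖ :=
        ContinuousLinearMap.le_opNorm _ _
    _ ≤ ‖Matrix.toEuclideanCLM (𝕜 := ℝ) N‖ * 1 := by
        apply mul_le_mul_of_nonneg_left _ (norm_nonneg _)
        rw [← vnorm_eq]; exact hu
    _ = ‖Matrix.toEuclideanCLM (𝕜 := ℝ) N‖ := mul_one _

lemma opNorm_nonneg {p : ℕ} (N : Matrix (Fin p) (Fin p) ℝ) : 0 ≤ opNorm N := by
  have h0 : (0:ℝ) ∈ ((fun v => vnorm (N.mulVec v)) '' {v | vnorm v ≤ 1}) := by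
    refine ⟨0, by simp [vnorm], ?_⟩
    simp [vnorm, Matrix.mulVec_zero]
  exact le_csSup (bddAbove_opSet N) h0

lemma vnorm_mulVec_le {p : ℕ} (N : Matrix (Fin p) (Fin p) ℝ) (v : Fin p → ℝ) :
    vnorm (N.mulVec v) ≤ opNorm N * vnorm v := by
  rcases eq_or_ne (vnorm v) 0 with h | h
  · have hv0 : v = 0 := by
      have h1 := vnorm_eq v
      rw [h] at h1
      have h2 : (WithLp.equiv 2 (Fin p → ℝ)).symm v = 0 := norm_eq_zero.1 h1.symm
      have := congrArg (WithLp.equiv 2 (Fin p → ℝ)) h2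
      simpa using this
    simp [hv0, vnorm, Matrix.mulVec_zero, h]
  · have hpos : 0 < vnorm v := lt_of_le_of_ne (vnorm_nonneg_s9 v) (Ne.symm h)
    set c := vnorm v with hc
    have hu : vnorm (c⁻¹ • v) = 1 := by
      rw [vnorm_smul, abs_of_pos (inv_pos.2 hpos), ← hc, inv_mul_cancel₀ (ne_of_gt hpos)]
    have hmem : vnorm (N.mulVec (c⁻¹ • v))
        ∈ ((fun w => vnorm (N.mulVec w)) '' {w | vnorm w ≤ 1}) :=
      ⟨c⁻¹ • v, by simp [hu], rfl⟩
    have hle := le_csSup (bddAbove_opSet N) hmem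
    rw [Matrix.mulVec_smul, vnorm_smul, abs_of_pos (inv_pos.2 hpos)] at hle
    calc vnorm (N.mulVec v) = c * (c⁻¹ * vnorm (N.mulVec v)) := by
          field_simp
      _ ≤ c * opNorm N := mul_le_mul_of_nonneg_left hle (le_of_lt hpos)
      _ = opNorm N * c := mul_comm _ _

lemma cube_diff_le {p : ℕ} (u : Fin p → ℝ) (r : ℝ) (hr : ∀ i, |u i| ≤ r) :
    volume ((Set.pi Set.univ fun _ : Fin p => Set.Ioo (0:ℝ) 1) \
      ((· + u) '' (Set.pi Set.univ fun _ => Set.Ioo (0:ℝ) 1)))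
      ≤ (p : ENNReal) * ENNReal.ofReal r := by
  set C : Set (Fin p → ℝ) := Set.pi Set.univ fun _ => Set.Ioo (0:ℝ) 1 with hC
  set T : Fin p → Set ℝ := fun i => Set.Ioc 0 (u i) ∪ Set.Ico (1 + u i) 1 with hT
  set S : Fin p → Set (Fin p → ℝ) :=
    fun i => Set.pi Set.univ (Function.update (fun _ => Set.Ioo (0:ℝ) 1) i (T i)) with hS
  have hsub : C \ ((· + u) '' C) ⊆ ⋃ i, S i := by
    rintro x ⟨hxC, hx⟩
    have hx' : x - u ∉ C := by
      intro hmem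
      exact hx ⟨x - u, hmem, by funext j; simp⟩
    rw [hC, Set.mem_pi] at hx'
    push_neg at hx'
    obtain ⟨i, -, hi⟩ := hx'
    have hxi : x i ∈ Set.Ioo (0:ℝ) 1 := hxC i (Set.mem_univ i)
    refine Set.mem_iUnion.2 ⟨i, Set.mem_pi.2 fun j _ => ?_⟩
    rcases eq_or_ne j i with rfl | hj
    · rw [Function.update_self]
      have hsub' : (x - u) j = x j - u j := rfl
      rw [hsub', Set.mem_Ioo, not_and_or, not_lt, not_lt] at hi
      rcases hi with h1 | h1
      · exact Or.inl ⟨hxi.1, by linarith⟩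
      · exact Or.inr ⟨by linarith, hxi.2⟩
    · rw [Function.update_of_ne hj]
      exact hxC j (Set.mem_univ j)
  have hSvol : ∀ i, volume (S i) ≤ ENNReal.ofReal r := by
    intro i
    rw [hS, volume_pi_pi]
    have hTi : volume (T i) ≤ ENNReal.ofReal r := by
      rw [hT]
      refine le_trans (measure_union_le _ _) ?_
      rw [Real.volume_Ioc, Real.volume_Ico]
      rcases le_total 0 (u i) with hu0 | hu0
      · have h0 : ENNReal.ofReal (1 - (1 + u i)) = 0 := ENNReal.ofReal_of_nonpos (by linarith)
        rw [h0, add_zero, sub_zero]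
        exact ENNReal.ofReal_le_ofReal (le_trans (le_abs_self _) (hr i))
      · have h0 : ENNReal.ofReal (u i - 0) = 0 := ENNReal.ofReal_of_nonpos (by linarith)
        rw [h0, zero_add]
        have h1 : (1 : ℝ) - (1 + u i) = -u i := by ring
        rw [h1]
        exact ENNReal.ofReal_le_ofReal (le_trans (neg_le_abs _) (hr i))
    calc (∏ j, volume (Function.update (fun _ => Set.Ioo (0:ℝ) 1) i (T i) j))
        ≤ ∏ j, Function.update (fun _ : Fin p => (1 : ENNReal)) i (ENNReal.ofReal r) j := by
          refine Finset.prod_le_prod' fun j _ => ?_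
          rcases eq_or_ne j i with rfl | hj
          · rw [Function.update_self, Function.update_self]; exact hTi
          · rw [Function.update_of_ne hj, Function.update_of_ne hj, Real.volume_Ioo]
            simp
      _ = ENNReal.ofReal r := by
          rw [Finset.prod_update_of_mem (Finset.mem_univ i)]
          simp
  calc volume (C \ ((· + u) '' C)) ≤ volume (⋃ i, S i) := measure_mono hsub
    _ ≤ ∑ i, volume (S i) := measure_iUnion_fintype_le _ _
    _ ≤ ∑ _i : Fin p, ENNReal.ofReal r := Finset.sum_le_sum fun i _ => hSvol i
    _ = (p : ENNReal) * ENNReal.ofReal r := by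
        rw [Finset.sum_const, Finset.card_univ, Fintype.card_fin, nsmul_eq_mul]

lemma volume_image_add {p : ℕ} (w : Fin p → ℝ) (s : Set (Fin p → ℝ)) :
    volume ((· + w) '' s) = volume s := by
  rw [Set.image_add_right]
  exact measure_preimage_add_right volume (-w) s

/-- Volume of the symmetric difference of a parallelepiped A = M(0,1)^p and its
translate A + v: at most 2p·|det M|·‖M⁻¹‖·η when ‖v‖ ≤ η. -/
theorem symmDiff_parallelepiped_translate {p : ℕ}
    (M : Matrix (Fin p) (Fin p) ℝ) (hM : IsUnit M.det)
    (v : Fin p → ℝ) (η : ℝ) (hv : vnorm v ≤ η) :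
    volume (symmDiff (M.mulVec '' Set.pi Set.univ fun _ => Set.Ioo (0 : ℝ) 1)
        ((· + v) '' (M.mulVec '' Set.pi Set.univ fun _ => Set.Ioo (0 : ℝ) 1)))
      ≤ ENNReal.ofReal (2 * p * |M.det| * opNorm M⁻¹ * η) := by
  set C : Set (Fin p → ℝ) := Set.pi Set.univ fun _ => Set.Ioo (0:ℝ) 1 with hC
  set w : Fin p → ℝ := M⁻¹.mulVec v with hw
  have hMw : M.mulVec w = v := by
    rw [hw, Matrix.mulVec_mulVec, Matrix.mul_nonsing_inv M hM, Matrix.one_mulVec]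
  -- injectivity of mulVec
  have hinj : Function.Injective (M.mulVec) := by
    intro x y hxy
    have : M⁻¹.mulVec (M.mulVec x) = M⁻¹.mulVec (M.mulVec y) := by rw [hxy]
    rwa [Matrix.mulVec_mulVec, Matrix.mulVec_mulVec, Matrix.nonsing_inv_mul M hM,
      Matrix.one_mulVec, Matrix.one_mulVec] at this
  -- translate of A equals image of translated cube
  have himg : (· + v) '' (M.mulVec '' C) = M.mulVec '' ((· + w) '' C) := by
    rw [Set.image_image, Set.image_image]
    apply Set.image_congr
    intro x _
    rw [Matrix.mulVec_add, hMw]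
  rw [himg, ← Set.image_symmDiff hinj]
  -- volume under linear map
  have hlin : volume (M.mulVec '' (symmDiff C ((· + w) '' C)))
      = ENNReal.ofReal |M.det| * volume (symmDiff C ((· + w) '' C)) := by
    have h1 : M.mulVec '' (symmDiff C ((· + w) '' C))
        = (Matrix.toLin' M) '' (symmDiff C ((· + w) '' C)) := by
      apply Set.image_congr
      intro x _
      rw [Matrix.toLin'_apply]
    rw [h1, Measure.addHaar_image_linearMap, LinearMap.det_toLin']
  rw [hlin]
  -- bound the cube symmetric difference
  have hr : ∀ i, |w i| ≤ vnorm w := abs_le_vnorm w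
  have hr' : ∀ i, |(-w) i| ≤ vnorm w := by
    intro i
    have : |(-w) i| = |w i| := by simp
    rw [this]; exact hr i
  have hsd : volume (symmDiff C ((· + w) '' C))
      ≤ (2 * p : ENNReal) * ENNReal.ofReal (vnorm w) := by
    rw [symmDiff_def]
    have h2 : ((· + w) '' C) \ C = (· + w) '' (C \ ((· + (-w)) '' C)) := by
      rw [Set.image_diff (add_left_injective w), Set.image_image]
      have : C = (fun x => x + -w + w) '' C := by
        simp
      rw [← this]
    calc volume ((C \ ((· + w) '' C)) ⊔ (((· + w) '' C) \ C))
        ≤ volume (C \ ((· + w) '' C)) + volume (((· + w) '' C) \ C) := measure_union_le _ _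
      _ = volume (C \ ((· + w) '' C)) + volume (C \ ((· + (-w)) '' C)) := by
          rw [h2, volume_image_add]
      _ ≤ (p : ENNReal) * ENNReal.ofReal (vnorm w) + (p : ENNReal) * ENNReal.ofReal (vnorm w) :=
          add_le_add (cube_diff_le w (vnorm w) hr) (cube_diff_le (-w) (vnorm w) hr')
      _ = (2 * p : ENNReal) * ENNReal.ofReal (vnorm w) := by ring
  -- combine
  have hwv : vnorm w ≤ opNorm M⁻¹ * η := by
    calc vnorm w ≤ opNorm M⁻¹ * vnorm v := vnorm_mulVec_le M⁻¹ v
      _ ≤ opNorm M⁻¹ * η := mul_le_mul_of_nonneg_left hv (opNorm_nonneg _)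
  calc ENNReal.ofReal |M.det| * volume (symmDiff C ((· + w) '' C))
      ≤ ENNReal.ofReal |M.det| * ((2 * p : ENNReal) * ENNReal.ofReal (vnorm w)) :=
        mul_le_mul_right hsd _
    _ = ENNReal.ofReal (|M.det| * (2 * p * vnorm w)) := by
        rw [ENNReal.ofReal_mul (abs_nonneg _)]
        congr 1
        rw [show ((2:ℝ) * p * vnorm w) = ((2*p:ℕ):ℝ) * vnorm w by push_cast; ring,
          ENNReal.ofReal_mul (by positivity), ENNReal.ofReal_natCast]
        push_cast; ring
    _ ≤ ENNReal.ofReal (2 * p * |M.det| * opNorm M⁻¹ * η) := by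
        apply ENNReal.ofReal_le_ofReal
        have h1 : |M.det| * (2 * p * vnorm w) = 2 * p * |M.det| * vnorm w := by ring
        rw [h1]
        have h2 : (0:ℝ) ≤ 2 * p * |M.det| := by positivity
        calc 2 * p * |M.det| * vnorm w ≤ 2 * p * |M.det| * (opNorm M⁻¹ * η) :=
              mul_le_mul_of_nonneg_left hwv h2
          _ = 2 * p * |M.det| * opNorm M⁻¹ * η := by ring

end
end
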